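/- Let G be a finitely generated abelian group with finite symmetric generating set S = S⁻¹ (1 ∉ S) and word metric d. Then every weakly-geodesic ray γ : T → G admits a geodesic ray γ' : T' → G with lim_{t→∞, t∈T} (d(γ(t),y) − d(γ(t),z)) = lim_{t→∞, t∈T'} (d(γ'(t),y) − d(γ'(t),z)) for all y, z ∈ G; that is, every point of the metric boundary of the Cayley graph of (G,S) is a Busemann point. -/

import Mathlib

open Filter Topology

/-- `T` is a valid domain for a ray: an unbounded subset of `[0,∞)` containing `0`. -/
def IsRayDomain (T : Set ℝ) : Prop :=
  T ⊆ Set.Ici (0 : ℝ) ∧ 0 ∈ T ∧ ∀ M : ℝ, ∃ t ∈ T, M < t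

/-- A weakly-geodesic ray for the distance function `d`. -/
def WeaklyGeodesicRay {X : Type*} (d : X → X → ℝ) (T : Set ℝ) (γ : ℝ → X) : Prop :=
  ∀ y : X, ∀ ε : ℝ, 0 < ε → ∃ N : ℝ, ∀ s ∈ T, ∀ t ∈ T, N ≤ s → N ≤ t →
    |d (γ t) (γ 0) - t| < ε ∧ |d (γ t) y - d (γ s) y - (t - s)| < ε

/-- An almost-geodesic ray for the distance function `d`. -/
def AlmostGeodesicRay {X : Type*} (d : X → X → ℝ) (T : Set ℝ) (γ : ℝ → X) : Prop :=
  ∀ ε : ℝ, 0 < ε → ∃ N : ℝ, ∀ s ∈ T, ∀ t ∈ T, N ≤ s → s ≤ t →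
    |d (γ t) (γ s) + d (γ s) (γ 0) - t| < ε

/-- A geodesic ray for the distance function `d`. -/
def GeodesicRay {X : Type*} (d : X → X → ℝ) (T : Set ℝ) (γ : ℝ → X) : Prop :=
  ∀ s ∈ T, ∀ t ∈ T, d (γ s) (γ t) = |s - t|

/-- `L` is the limit of `d(γ(t),y) - d(γ(t),z)` as `t → ∞` along `T`. -/
def RayLimit {X : Type*} (d : X → X → ℝ) (T : Set ℝ) (γ : ℝ → X) (y z : X) (L : ℝ) : Prop :=
  Tendsto (fun t => d (γ t) y - d (γ t) z) (atTop ⊓ 𝓟 T) (𝓝 L)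

/-- The word metric on a group `G` with respect to a generating set `S`:
`wordDist S g h` is the least `n` such that `g⁻¹ * h` is a product of `n` elements of `S`. -/
noncomputable def wordDist {G : Type*} [Group G] (S : Set G) (g h : G) : ℕ :=
  sInf {n | ∃ l : List G, l.length = n ∧ (∀ x ∈ l, x ∈ S) ∧ l.prod = g⁻¹ * h}

section WD
variable {G : Type*} [CommGroup G] {S : Set G}

theorem wd_exists_list (hSsym : ∀ s ∈ S, s⁻¹ ∈ S) (hgen : Subgroup.closure S = ⊤) (g h : G) :
    ∃ l : List G, (∀ x ∈ l, x ∈ S) ∧ l.prod = g⁻¹ * h := by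
  have hx : (g⁻¹ * h) ∈ Subgroup.closure S := by rw [hgen]; trivial
  suffices H : ∀ x : G, x ∈ Subgroup.closure S → ∃ l : List G, (∀ y ∈ l, y ∈ S) ∧ l.prod = x from
    H _ hx
  intro x hx
  induction hx using Subgroup.closure_induction with
  | mem x hx => exact ⟨[x], by simpa using hx, by simp⟩
  | one => exact ⟨[], by simp, by simp⟩
  | mul x y _ _ ihx ihy =>
      obtain ⟨l1, h1, p1⟩ := ihx; obtain ⟨l2, h2, p2⟩ := ihy
      refine ⟨l1 ++ l2, ?_, by simp [p1, p2]⟩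
      intro a ha; rcases List.mem_append.1 ha with h'|h'
      exacts [h1 a h', h2 a h']
  | inv x _ ihx =>
      obtain ⟨l, hl, pl⟩ := ihx
      refine ⟨(l.map Inv.inv).reverse, ?_, ?_⟩
      · intro a ha
        simp only [List.mem_reverse, List.mem_map] at ha
        obtain ⟨b, hb, rfl⟩ := ha
        exact hSsym b (hl b hb)
      · rw [← List.prod_inv_reverse, pl]

theorem wd_spec (hSsym : ∀ s ∈ S, s⁻¹ ∈ S) (hgen : Subgroup.closure S = ⊤) (g h : G) :
    ∃ l : List G, l.length = wordDist S g h ∧ (∀ x ∈ l, x ∈ S) ∧ l.prod = g⁻¹ * h := by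
  have hne : {n | ∃ l : List G, l.length = n ∧ (∀ x ∈ l, x ∈ S) ∧ l.prod = g⁻¹ * h}.Nonempty := by
    obtain ⟨l, h1, h2⟩ := wd_exists_list hSsym hgen g h
    exact ⟨l.length, l, rfl, h1, h2⟩
  exact Nat.sInf_mem hne

theorem wd_le (g h : G) (l : List G) (hl : ∀ x ∈ l, x ∈ S) (hp : l.prod = g⁻¹ * h) :
    wordDist S g h ≤ l.length :=
  Nat.sInf_le ⟨l, rfl, hl, hp⟩

theorem wd_triangle (hSsym : ∀ s ∈ S, s⁻¹ ∈ S) (hgen : Subgroup.closure S = ⊤) (g k h : G) :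
    wordDist S g h ≤ wordDist S g k + wordDist S k h := by
  obtain ⟨l1, e1, m1, p1⟩ := wd_spec hSsym hgen g k
  obtain ⟨l2, e2, m2, p2⟩ := wd_spec hSsym hgen k h
  have := wd_le (S := S) g h (l1 ++ l2)
    (by intro a ha; rcases List.mem_append.1 ha with h'|h'; exacts [m1 a h', m2 a h'])
    (by rw [List.prod_append, p1, p2]; group)
  simpa [e1, e2] using this

theorem wd_symm (hSsym : ∀ s ∈ S, s⁻¹ ∈ S) (hgen : Subgroup.closure S = ⊤) (g h : G) :
    wordDist S g h = wordDist S h g := by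
  have key : ∀ a b : G, wordDist S a b ≤ wordDist S b a := by
    intro a b
    obtain ⟨l, e, m, p⟩ := wd_spec hSsym hgen b a
    refine le_trans (wd_le (S := S) a b ((l.map Inv.inv).reverse) ?_ ?_) (by simp [e])
    · intro x hx
      simp only [List.mem_reverse, List.mem_map] at hx
      obtain ⟨c, hc, rfl⟩ := hx
      exact hSsym c (m c hc)
    · rw [← List.prod_inv_reverse, p]; group
  exact le_antisymm (key g h) (key h g)

theorem wd_mul_le (o : G) (A : Multiset G) (hA : ∀ x ∈ A, x ∈ S) :
    wordDist S o (o * A.prod) ≤ Multiset.card A := by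
  refine le_trans (wd_le (S := S) o (o * A.prod) A.toList ?_ ?_) (by simp)
  · intro x hx; exact hA x (by rwa [← Multiset.mem_toList])
  · rw [Multiset.prod_toList]; group

theorem wd_sub_le (o : G) {A1 A2 : Multiset G} (h12 : A1 ≤ A2) (hA : ∀ x ∈ A2, x ∈ S) :
    wordDist S (o * A1.prod) (o * A2.prod) + Multiset.card A1 ≤ Multiset.card A2 := by
  classical
  have hsub : (A2 - A1) + A1 = A2 := tsub_add_cancel_of_le h12
  have hprod : (A2 - A1).prod * A1.prod = A2.prod := by
    rw [← Multiset.prod_add, hsub]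
  have hle := wd_mul_le (S := S) (o * A1.prod) (A2 - A1)
    (fun x hx => hA x (Multiset.mem_of_le (Multiset.sub_le_self _ _) hx))
  have e : o * A1.prod * (A2 - A1).prod = o * A2.prod := by
    rw [mul_assoc, mul_comm A1.prod, hprod]
  rw [e] at hle
  have hcard : Multiset.card (A2 - A1) + Multiset.card A1 = Multiset.card A2 := by
    rw [← Multiset.card_add, hsub]
  omega

/-- GEO: exact distances along geodesic sub-multisets -/
theorem wd_geo (hSsym : ∀ s ∈ S, s⁻¹ ∈ S) (hgen : Subgroup.closure S = ⊤)
    (o x : G) {A1 A2 Bm : Multiset G} (h12 : A1 ≤ A2) (h2B : A2 ≤ Bm)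
    (hB : ∀ s ∈ Bm, s ∈ S) (hBx : o * Bm.prod = x)
    (hgeo : wordDist S o x = Multiset.card Bm) :
    wordDist S (o * A1.prod) (o * A2.prod) + Multiset.card A1 = Multiset.card A2 ∧
    wordDist S (o * A2.prod) x + Multiset.card A2 = Multiset.card Bm := by
  have h1B : A1 ≤ Bm := le_trans h12 h2B
  have t1 : wordDist S o (o * A1.prod) ≤ Multiset.card A1 := by
    have := wd_sub_le (S := S) o (Multiset.zero_le A1) (fun s hs => hB s (Multiset.mem_of_le h1B hs))
    simpa using this
  have t2 : wordDist S (o * A1.prod) (o * A2.prod) + Multiset.card A1 ≤ Multiset.card A2 :=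
    wd_sub_le (S := S) o h12 (fun s hs => hB s (Multiset.mem_of_le h2B hs))
  have t3 : wordDist S (o * A2.prod) x + Multiset.card A2 ≤ Multiset.card Bm := by
    have := wd_sub_le (S := S) o h2B hB
    rwa [hBx] at this
  have tri : wordDist S o x ≤
      wordDist S o (o * A1.prod) + wordDist S (o * A1.prod) (o * A2.prod) +
      wordDist S (o * A2.prod) x :=
    le_trans (wd_triangle hSsym hgen o (o * A2.prod) x)
      (add_le_add_left (wd_triangle hSsym hgen o (o * A1.prod) (o * A2.prod)) _)
  rw [hgeo] at tri
  omega

/-- an ℤ-valued quantity with |·| < 1 as real is zero -/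
theorem int_abs_lt_one {a : ℤ} (h : |(a : ℝ)| < 1) : a = 0 := by
  rcases abs_lt.1 h with ⟨h1, h2⟩
  have g1 : (-1 : ℤ) < a := by exact_mod_cast h1
  have g2 : a < 1 := by exact_mod_cast h2
  omega

theorem ultra_pigeon {α : Type*} (U : Ultrafilter α) (f : α → ℕ) :
    ∀ M : ℕ, {x | f x < M} ∈ U → ∃ v : ℕ, {x | f x = v} ∈ U := by
  intro M
  induction M with
  | zero => intro h; simpa using (by simpa using h : (∅ : Set α) ∈ U)
  | succ M ih =>
      intro h
      have : {x | f x < M} ∪ {x | f x = M} ∈ U := by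
        refine Filter.mem_of_superset h ?_
        intro x hx; simp only [Set.mem_setOf_eq, Set.mem_union] at *; omega
      rcases Ultrafilter.union_mem_iff.1 this with h'|h'
      · exact ih h'
      · exact ⟨M, h'⟩
end WD

/-- Let `G` be a finitely generated abelian group with finite symmetric
generating set `S` (with `1 ∉ S`) and word metric `d`. Then every point of the metric
boundary of the Cayley graph is a Busemann point: every weakly-geodesic ray has the same
boundary limits as some geodesic ray. -/
theorem stmt10 {G : Type*} [CommGroup G] (S : Set G) (hSfin : S.Finite)
    (hSsym : ∀ s ∈ S, s⁻¹ ∈ S) (hone : (1 : G) ∉ S)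
    (hgen : Subgroup.closure S = ⊤) :
    ∀ (T : Set ℝ) (γ : ℝ → G), IsRayDomain T →
      WeaklyGeodesicRay (fun g h => (wordDist S g h : ℝ)) T γ →
      ∃ (T' : Set ℝ) (γ' : ℝ → G), IsRayDomain T' ∧
        GeodesicRay (fun g h => (wordDist S g h : ℝ)) T' γ' ∧
        ∀ y z : G, ∃ L : ℝ,
          RayLimit (fun g h => (wordDist S g h : ℝ)) T γ y z L ∧
          RayLimit (fun g h => (wordDist S g h : ℝ)) T' γ' y z L := by
  classical
  intro T γ hT hwg
  -- minimal words from the basepoint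
  obtain ⟨hT0, hT0mem, hTub⟩ := hT
  choose l hlen hmemS hprodl using fun t : ℝ => wd_spec (S := S) hSsym hgen (γ 0) (γ t)
  set m : ℝ → Multiset G := fun t => (l t : Multiset G) with hm
  have hmcard : ∀ t, Multiset.card (m t) = wordDist S (γ 0) (γ t) := fun t => by
    simp only [hm, Multiset.coe_card]; exact hlen t
  have hmprod : ∀ t, γ 0 * (m t).prod = γ t := fun t => by
    simp only [hm, Multiset.prod_coe, hprodl t, mul_inv_cancel_left]
  have hmS : ∀ t, ∀ x ∈ m t, x ∈ S := fun t x hx => hmemS t x (by simpa [hm] using hx)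
  -- the ultrafilter
  haveI hTne : (atTop ⊓ 𝓟 T).NeBot := by
    rw [inf_principal_neBot_iff]
    intro V hV
    rw [mem_atTop_sets] at hV
    obtain ⟨a, ha⟩ := hV
    obtain ⟨t, htT, hat⟩ := hTub a
    exact ⟨t, ha t hat.le, htT⟩
  set U : Ultrafilter ℝ := Ultrafilter.of (atTop ⊓ 𝓟 T) with hUdef
  have hUle : (U : Filter ℝ) ≤ atTop ⊓ 𝓟 T := Ultrafilter.of_le _
  have hUmem : ∀ N : ℝ, {t | N ≤ t ∧ t ∈ T} ∈ U := by
    intro N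
    have : Set.Ici N ∩ T ∈ atTop ⊓ 𝓟 T := inter_mem_inf (Ici_mem_atTop N) (mem_principal_self T)
    exact hUle this
  -- growth of distance
  obtain ⟨N1, hN1⟩ := hwg (γ 0) 1 one_pos
  have hgrow : ∀ t ∈ T, N1 ≤ t → (t : ℝ) - 1 < (wordDist S (γ 0) (γ t) : ℝ) := by
    intro t ht hNt
    have h1 := (hN1 t ht t ht hNt hNt).1
    rw [wd_symm hSsym hgen]
    have := abs_lt.1 h1
    linarith [this.1]
  -- infinite and finite letters
  set Kp : G → Prop := fun s => ∀ M : ℕ, {t | M ≤ (m t).count s} ∈ U with hKp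
  have hv0 : ∀ s : G, ∃ v : ℕ, (¬ Kp s → {t | (m t).count s = v} ∈ U) := by
    intro s
    by_cases h : Kp s
    · exact ⟨0, fun h' => absurd h h'⟩
    · obtain ⟨M, hM⟩ := not_forall.1 h
      have : {t | (m t).count s < M} ∈ U := by
        have := Ultrafilter.compl_mem_iff_notMem.2 hM
        refine Filter.mem_of_superset this ?_
        intro t ht
        simp only [Set.mem_compl_iff, Set.mem_setOf_eq, not_le] at *
        exact ht
      obtain ⟨vv, hvv⟩ := ultra_pigeon U (fun t => (m t).count s) M this
      exact ⟨vv, fun _ => hvv⟩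
  choose v hv using hv0
  set Sf : Finset G := hSfin.toFinset with hSfdef
  have hSfS : ∀ s ∈ Sf, s ∈ S := fun s hs => hSfin.mem_toFinset.1 hs
  -- some letter has unbounded multiplicity
  have hKne : ∃ s ∈ Sf, Kp s := by
    by_contra hcon
    push_neg at hcon
    have hIU : (⋂ s ∈ Sf, {t | (m t).count s = v s}) ∈ U :=
      (biInter_finset_mem Sf).2 (fun s hs => hv s (hcon s hs))
    set M : ℕ := ∑ s ∈ Sf, v s with hMdef
    have hbig : {t | max N1 ((M : ℝ) + 2) ≤ t ∧ t ∈ T} ∈ U := hUmem _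
    obtain ⟨t, htI, htN, htT⟩ := Ultrafilter.nonempty_of_mem (inter_mem hIU hbig)
    have hsub : (m t).toFinset ⊆ Sf := by
      intro a ha
      rw [hSfdef, hSfin.mem_toFinset]
      exact hmS t a (Multiset.mem_toFinset.1 ha)
    have hcardle : Multiset.card (m t) ≤ M := by
      rw [← Multiset.toFinset_sum_count_eq]
      refine le_trans (Finset.sum_le_sum_of_subset hsub) ?_
      rw [hMdef]
      refine Finset.sum_le_sum ?_
      intro s hs
      have := htI
      simp only [Set.mem_iInter] at this
      exact le_of_eq (this s hs)
    have h1 : (t : ℝ) - 1 < (wordDist S (γ 0) (γ t) : ℝ) :=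
      hgrow t htT (le_trans (le_max_left _ _) htN)
    have h2 : ((M : ℝ) + 2) ≤ t := le_trans (le_max_right _ _) htN
    have h3 : (wordDist S (γ 0) (γ t) : ℝ) ≤ M := by
      rw [← hmcard t]; exact_mod_cast hcardle
    linarith
  -- the infinite word
  set kl : List G := (Sf.filter Kp).toList with hkldef
  have hklK : ∀ s ∈ kl, Kp s ∧ s ∈ Sf := by
    intro s hs
    rw [hkldef, Finset.mem_toList, Finset.mem_filter] at hs
    exact ⟨hs.2, hs.1⟩
  have hr : 0 < kl.length := by
    obtain ⟨s, hs, hKs⟩ := hKne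
    rw [hkldef, Finset.length_toList, Finset.card_pos]
    exact ⟨s, Finset.mem_filter.2 ⟨hs, hKs⟩⟩
  set BM : Multiset G := (Sf.filter (fun s => ¬ Kp s)).val.bind
      (fun s => Multiset.replicate (v s) s) with hBMdef
  have hBMcount : ∀ s : G, BM.count s =
      if s ∈ Sf.filter (fun s => ¬ Kp s) then v s else 0 := by
    intro s
    rw [hBMdef, Multiset.count_bind]
    simp only [Multiset.count_replicate]
    exact Finset.sum_ite_eq' _ s v
  have hBMS : ∀ x ∈ BM, x ∈ S ∧ ¬ Kp x := by
    intro x hx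
    rw [hBMdef, Multiset.mem_bind] at hx
    obtain ⟨a, ha, hxa⟩ := hx
    rw [Multiset.eq_of_mem_replicate hxa]
    rw [Finset.mem_val, Finset.mem_filter] at ha
    exact ⟨hSfS a ha.1, ha.2⟩
  set Bl : List G := BM.toList with hBldef
  set NB : ℕ := Bl.length with hNBdef
  have hBlBM : (Bl : Multiset G) = BM := Multiset.coe_toList BM
  -- the infinite word
  set w : ℕ → G := fun i =>
    if h : i < NB then Bl[i] else kl[(i - NB) % kl.length]'(Nat.mod_lt _ hr) with hwdef
  have hwS : ∀ i, w i ∈ S := by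
    intro i
    rw [hwdef]
    by_cases h : i < NB
    · simp only [h, dif_pos]
      have : Bl[i] ∈ Bl := List.getElem_mem _
      rw [← Multiset.mem_coe, hBlBM] at this
      exact (hBMS _ this).1
    · simp only [h, dif_neg, not_false_iff]
      have : kl[(i - NB) % kl.length]'(Nat.mod_lt _ hr) ∈ kl := List.getElem_mem _
      exact hSfS _ (hklK _ this).2
  have hwK : ∀ i, NB ≤ i → Kp (w i) := by
    intro i hi
    rw [hwdef]
    have h : ¬ i < NB := not_lt.2 hi
    simp only [h, dif_neg, not_false_iff]
    have : kl[(i - NB) % kl.length]'(Nat.mod_lt _ hr) ∈ kl := List.getElem_mem _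
    exact (hklK _ this).1
  -- prefix multisets
  set C : ℕ → Multiset G := fun n => ((List.range n).map w : List G) with hCdef
  have hCcard : ∀ n, Multiset.card (C n) = n := by
    intro n; rw [hCdef]; simp
  have hCsucc : ∀ n, C (n + 1) = C n + {w n} := by
    intro n
    rw [hCdef]
    simp only [List.range_succ, List.map_append, List.map_cons, List.map_nil]
    rfl
  have hCmono : ∀ {n1 n2 : ℕ}, n1 ≤ n2 → C n1 ≤ C n2 := by
    intro n1 n2 h
    rw [hCdef]
    exact Multiset.coe_le.2 (((List.range_sublist.2 h).map w).subperm)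
  have hCS : ∀ n, ∀ x ∈ C n, x ∈ S := by
    intro n x hx
    rw [hCdef] at hx
    simp only [Multiset.mem_coe, List.mem_map, List.mem_range] at hx
    obtain ⟨i, _, rfl⟩ := hx
    exact hwS i
  have hCcount : ∀ s : G, ∀ n, (C (n+1)).count s = (C n).count s + if s = w n then 1 else 0 := by
    intro s n
    rw [hCsucc n, Multiset.count_add, Multiset.count_singleton]
  have hCcountmono : ∀ s : G, ∀ {n1 n2 : ℕ}, n1 ≤ n2 → (C n1).count s ≤ (C n2).count s := by
    intro s n1 n2 h12
    exact Multiset.count_le_of_le s (hCmono h12)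
  -- prefix up to NB is exactly BM
  have hCtake : ∀ n, n ≤ NB → C n = ((Bl.take n : List G) : Multiset G) := by
    intro n
    induction n with
    | zero => intro _; rw [hCdef]; rfl
    | succ n ih =>
        intro h
        have hn : n < NB := lt_of_lt_of_le (Nat.lt_succ_self n) h
        rw [hCsucc n, ih hn.le]
        have hwn : w n = Bl[n]'(by rwa [← hNBdef]) := by
          rw [hwdef]; simp [hn]
        rw [hwn]
        have : Bl.take n ++ [Bl[n]'(by rwa [← hNBdef])] = Bl.take (n+1) := by
          rw [List.take_succ, List.getElem?_eq_getElem (by rwa [← hNBdef])]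
          rfl
        rw [← this]
        rfl
  have hCNB : C NB = BM := by
    rw [hCtake NB le_rfl, List.take_length, hBlBM]
  -- counts of non-Kp letters
  have hfinEq : ∀ s : G, ¬ Kp s → ∀ n, NB ≤ n → (C n).count s = BM.count s := by
    intro s hs n hn
    induction n with
    | zero => rw [Nat.le_zero] at hn; rw [← hCNB, hn]
    | succ n ih =>
        rcases Nat.lt_or_ge NB (n+1) with h | h
        · have hn' : NB ≤ n := Nat.lt_succ_iff.1 h
          rw [hCcount s n, ih hn', if_neg, add_zero]
          intro he
          exact hs (he ▸ hwK n hn')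
        · have : NB = n + 1 := le_antisymm hn h
          rw [← this, hCNB]
  have hfinLe : ∀ s : G, ¬ Kp s → ∀ n, (C n).count s ≤ BM.count s := by
    intro s hs n
    rcases le_or_gt n NB with h | h
    · calc (C n).count s ≤ (C NB).count s := hCcountmono s h
        _ = BM.count s := by rw [hCNB]
    · exact le_of_eq (hfinEq s hs n h.le)
  -- counts of Kp letters grow
  have hinf : ∀ s ∈ Sf, Kp s → ∀ M : ℕ, ∀ n, NB + M * kl.length ≤ n → M ≤ (C n).count s := by
    intro s hsf hs M
    have hskl : s ∈ kl := by
      rw [hkldef, Finset.mem_toList, Finset.mem_filter]; exact ⟨hsf, hs⟩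
    obtain ⟨⟨i₀, hi₀⟩, hgets⟩ := List.mem_iff_get.1 hskl
    have key : ∀ q : ℕ, q ≤ (C (NB + q * kl.length)).count s := by
      intro q
      induction q with
      | zero => exact Nat.zero_le _
      | succ q ih =>
          have hw : w (NB + q * kl.length + i₀) = s := by
            rw [hwdef]
            have h1 : ¬ NB + q * kl.length + i₀ < NB := by omega
            simp only [h1, dif_neg, not_false_iff]
            have h2 : NB + q * kl.length + i₀ - NB = q * kl.length + i₀ := by omega
            have h3 : (q * kl.length + i₀) % kl.length = i₀ := by
              rw [Nat.add_comm, Nat.add_mul_mod_self_right]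
              exact Nat.mod_eq_of_lt hi₀
            simp_rw [h2, h3]
            rw [← hgets]; rfl
          have step : (C (NB + q * kl.length)).count s + 1
              ≤ (C (NB + q * kl.length + i₀ + 1)).count s := by
            rw [hCcount s (NB + q * kl.length + i₀), if_pos hw.symm]
            have := hCcountmono s (Nat.le_add_right (NB + q * kl.length) i₀)
            omega
          have hle : NB + q * kl.length + i₀ + 1 ≤ NB + (q+1) * kl.length := by
            have : i₀ < kl.length := hi₀
            ring_nf
            omega
          have := hCcountmono s hle
          omega
    intro n hn
    exact le_trans (key M) (hCcountmono s hn)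
  -- prefixes are sub-multisets of geodesic words, U-often
  have hCU : ∀ n : ℕ, {t : ℝ | C n ≤ m t} ∈ U := by
    intro n
    have hper : ∀ s ∈ (C n).toFinset, {t : ℝ | (C n).count s ≤ (m t).count s} ∈ U := by
      intro s hs
      have hsS : s ∈ Sf := by
        rw [hSfdef, hSfin.mem_toFinset]
        exact hCS n s (Multiset.mem_toFinset.1 hs)
      by_cases hK : Kp s
      · exact hK ((C n).count s)
      · refine Filter.mem_of_superset (hv s hK) ?_
        intro t ht
        simp only [Set.mem_setOf_eq] at *
        rw [ht]
        have h4 : BM.count s = v s := by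
          rw [hBMcount, if_pos (Finset.mem_filter.2 ⟨hsS, hK⟩)]
        rw [← h4]
        exact hfinLe s hK n
    refine Filter.mem_of_superset ((biInter_finset_mem _).2 hper) ?_
    intro t ht
    simp only [Set.mem_iInter, Set.mem_setOf_eq] at ht ⊢
    rw [Multiset.le_iff_count]
    intro s
    by_cases hs : s ∈ (C n).toFinset
    · exact ht s hs
    · rw [Multiset.count_eq_zero_of_notMem (fun h => hs (Multiset.mem_toFinset.2 h))]
      exact Nat.zero_le _
  -- exact geodesic distances between prefix points
  have hgg : ∀ n1 n2 : ℕ, n1 ≤ n2 →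
      wordDist S (γ 0 * (C n1).prod) (γ 0 * (C n2).prod) + n1 = n2 := by
    intro n1 n2 h
    obtain ⟨t, htC⟩ := Ultrafilter.nonempty_of_mem (hCU n2)
    have := (wd_geo hSsym hgen (γ 0) (γ t) (hCmono h) htC (hmS t) (hmprod t)
      ((hmcard t).symm)).1
    rwa [hCcard, hCcard] at this
  have hgx : ∀ n : ℕ, ∀ t : ℝ, C n ≤ m t →
      wordDist S (γ 0 * (C n).prod) (γ t) + n = Multiset.card (m t) := by
    intro n t htC
    have := (wd_geo hSsym hgen (γ 0) (γ t) (le_refl (C n)) htC (hmS t) (hmprod t)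
      ((hmcard t).symm)).2
    rwa [hCcard] at this
  -- the per-target limit value and eventual equality
  have main : ∀ y : G, ∃ β : ℤ, ∃ N : ℝ,
      (∀ t ∈ T, N ≤ t → ((wordDist S (γ t) y : ℤ) - (wordDist S (γ t) (γ 0) : ℤ) = β)) ∧
      ∃ n₀ : ℕ, ∀ n, n₀ ≤ n → ((wordDist S (γ 0 * (C n).prod) y : ℤ) = n + β) := by
    intro y
    obtain ⟨Ny, hNy⟩ := hwg y (1/4) (by norm_num)
    obtain ⟨t₀, ht₀T, ht₀⟩ := hTub Ny
    set β : ℤ := (wordDist S (γ t₀) y : ℤ) - (wordDist S (γ t₀) (γ 0) : ℤ) with hβdef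
    have hβ : ∀ t ∈ T, Ny ≤ t → ((wordDist S (γ t) y : ℤ) - (wordDist S (γ t) (γ 0) : ℤ) = β) := by
      intro t htT htN
      have h1 := hNy t₀ ht₀T t htT ht₀.le htN
      have h2 := (hNy t₀ ht₀T t₀ ht₀T ht₀.le ht₀.le).1
      set a : ℤ := ((wordDist S (γ t) y : ℤ) - (wordDist S (γ t) (γ 0) : ℤ)) - β with hadef
      have ha : |(a : ℝ)| < 1 := by
        rw [hadef, hβdef]
        push_cast
        have hA := abs_lt.1 h1.2
        have hB := abs_lt.1 h1.1
        have hB0 := abs_lt.1 h2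
        simp only at hA hB hB0
        rw [abs_lt]
        constructor <;> linarith [hA.1, hA.2, hB.1, hB.2, hB0.1, hB0.2]
      have := int_abs_lt_one ha
      omega
    -- lower bound, valid for every n
    have hlow : ∀ n : ℕ, (n : ℤ) + β ≤ (wordDist S (γ 0 * (C n).prod) y : ℤ) := by
      intro n
      obtain ⟨t, htC, htN, htT⟩ := Ultrafilter.nonempty_of_mem
        (inter_mem (hCU n) (hUmem Ny))
      have h1 : wordDist S (γ 0 * (C n).prod) (γ t) + n = Multiset.card (m t) := hgx n t htC
      have h2 : (wordDist S (γ t) y : ℤ) - (wordDist S (γ t) (γ 0) : ℤ) = β := hβ t htT htN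
      have h3 : wordDist S (γ t) (γ 0) = Multiset.card (m t) := by
        rw [wd_symm hSsym hgen, hmcard]
      have h4 : wordDist S (γ t) y ≤ wordDist S (γ t) (γ 0 * (C n).prod)
          + wordDist S (γ 0 * (C n).prod) y := wd_triangle hSsym hgen _ _ _
      have h5 : wordDist S (γ t) (γ 0 * (C n).prod) = wordDist S (γ 0 * (C n).prod) (γ t) :=
        wd_symm hSsym hgen _ _
      omega
    refine ⟨β, Ny, hβ, ?_⟩
    -- upper bound via the exchange argument
    have hfix : {t : ℝ | ∀ s ∈ Sf, ¬ Kp s → (m t).count s = v s} ∈ U := by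
      have hI : (⋂ s ∈ Sf, {t : ℝ | ¬ Kp s → (m t).count s = v s}) ∈ U := by
        refine (biInter_finset_mem _).2 (fun s hs => ?_)
        by_cases h : Kp s
        · have : {t : ℝ | ¬ Kp s → (m t).count s = v s} = Set.univ := by
            ext t
            simp only [Set.mem_setOf_eq, Set.mem_univ, iff_true]
            intro hns; exact absurd h hns
          rw [this]; exact Filter.univ_mem
        · exact Filter.mem_of_superset (hv s h) (fun t ht _ => ht)
      refine Filter.mem_of_superset hI ?_
      intro t ht
      simp only [Set.mem_iInter, Set.mem_setOf_eq] at ht ⊢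
      exact ht
    obtain ⟨ts, hts1, htsN, htsT⟩ := Ultrafilter.nonempty_of_mem
      (inter_mem hfix (hUmem Ny))
    obtain ⟨e, helen, hemem, heprod⟩ := wd_spec (S := S) hSsym hgen y (γ ts)
    set A : Multiset G := m ts with hAdef
    set E : Multiset G := (e : Multiset G) with hEdef
    set J : Multiset G := A ∩ E with hJdef
    set c' : Multiset G := A - J with hc'def
    have hJA : J ≤ A := Multiset.inter_le_left
    have hJE : J ≤ E := Multiset.inter_le_right
    have hc'A : c' ≤ A := Multiset.sub_le_self _ _
    -- c' is eventually dominated by the prefixes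
    have hcount : ∀ s : G, ∃ n₀ : ℕ, ∀ n, n₀ ≤ n → c'.count s ≤ (C n).count s := by
      intro s
      by_cases hsS : s ∈ Sf
      · by_cases hK : Kp s
        · exact ⟨NB + (c'.count s) * kl.length, fun n hn => hinf s hsS hK _ n hn⟩
        · refine ⟨NB, fun n hn => ?_⟩
          have h1 : c'.count s ≤ A.count s := Multiset.count_le_of_le s hc'A
          have h2 : A.count s = v s := hts1 s hsS hK
          have h3 : (C n).count s = BM.count s := hfinEq s hK n hn
          have h4 : BM.count s = v s := by
            rw [hBMcount, if_pos (Finset.mem_filter.2 ⟨hsS, hK⟩)]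
          omega
      · refine ⟨0, fun n _ => ?_⟩
        have : c'.count s = 0 := by
          rw [Multiset.count_eq_zero]
          intro hmem
          exact hsS (by
            rw [hSfdef, hSfin.mem_toFinset]
            exact hmS ts s (Multiset.mem_of_le hc'A hmem))
        omega
    choose nf hnf using hcount
    refine ⟨c'.toFinset.sup nf, fun n hn => ?_⟩
    have hc'C : c' ≤ C n := by
      rw [Multiset.le_iff_count]
      intro s
      by_cases hs : s ∈ c'.toFinset
      · exact hnf s n (le_trans (Finset.le_sup hs) hn)
      · rw [Multiset.count_eq_zero_of_notMem (fun h => hs (Multiset.mem_toFinset.2 h))]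
        exact Nat.zero_le _
    -- upper bound
    have hAprod : c'.prod * J.prod = A.prod := by
      rw [← Multiset.prod_add, tsub_add_cancel_of_le hJA]
    have hEprod : (E - J).prod * J.prod = E.prod := by
      rw [← Multiset.prod_add, tsub_add_cancel_of_le hJE]
    have hE2 : E.prod = y⁻¹ * γ ts := by
      rw [hEdef, Multiset.prod_coe, heprod]
    have hyg' : y⁻¹ * (γ 0 * c'.prod) = (E - J).prod := by
      have h2 : y⁻¹ * (γ 0 * c'.prod) * J.prod = (E - J).prod * J.prod := by
        have e1 : y⁻¹ * (γ 0 * c'.prod) * J.prod = y⁻¹ * (γ 0 * (c'.prod * J.prod)) := by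
          group
        rw [e1, hAprod, hmprod ts, ← hE2, ← hEprod]
      exact mul_right_cancel h2
    have hup1 : wordDist S y (γ 0 * c'.prod) ≤ Multiset.card (E - J) := by
      refine le_trans (wd_le y _ (E - J).toList ?_ ?_) (by simp)
      · intro x hx
        rw [Multiset.mem_toList] at hx
        exact hemem x (by
          rw [← Multiset.mem_coe, ← hEdef]
          exact Multiset.mem_of_le (Multiset.sub_le_self _ _) hx)
      · rw [Multiset.prod_toList]
        exact hyg'.symm
    have hup2 : wordDist S (γ 0 * c'.prod) (γ 0 * (C n).prod) + Multiset.card c' ≤ n := by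
      have := wd_sub_le (S := S) (γ 0) hc'C (hCS n)
      rwa [hCcard] at this
    have htri : wordDist S (γ 0 * (C n).prod) y ≤
        wordDist S (γ 0 * (C n).prod) (γ 0 * c'.prod) + wordDist S (γ 0 * c'.prod) y :=
      wd_triangle hSsym hgen _ _ _
    have hs1 : wordDist S (γ 0 * (C n).prod) (γ 0 * c'.prod)
        = wordDist S (γ 0 * c'.prod) (γ 0 * (C n).prod) := wd_symm hSsym hgen _ _
    have hs2 : wordDist S (γ 0 * c'.prod) y = wordDist S y (γ 0 * c'.prod) :=
      wd_symm hSsym hgen _ _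
    have hcards1 : Multiset.card c' + Multiset.card J = Multiset.card A := by
      rw [← Multiset.card_add, tsub_add_cancel_of_le hJA]
    have hcards2 : Multiset.card (E - J) + Multiset.card J = Multiset.card E := by
      rw [← Multiset.card_add, tsub_add_cancel_of_le hJE]
    have hcardA : Multiset.card A = wordDist S (γ 0) (γ ts) := hmcard ts
    have hcardE : Multiset.card E = wordDist S y (γ ts) := by
      rw [hEdef, Multiset.coe_card, helen]
    have hsymE : wordDist S y (γ ts) = wordDist S (γ ts) y := wd_symm hSsym hgen _ _
    have hsymA : wordDist S (γ 0) (γ ts) = wordDist S (γ ts) (γ 0) := wd_symm hSsym hgen _ _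
    have hβts : (wordDist S (γ ts) y : ℤ) - (wordDist S (γ ts) (γ 0) : ℤ) = β :=
      hβ ts htsT htsN
    have hupper : (wordDist S (γ 0 * (C n).prod) y : ℤ) ≤ n + β := by omega
    have hlower := hlow n
    omega
  -- assemble the geodesic ray
  refine ⟨Set.range (fun n : ℕ => (n : ℝ)), fun r => γ 0 * (C ⌊r⌋₊).prod, ?_, ?_, ?_⟩
  · refine ⟨?_, ⟨0, by simp⟩, ?_⟩
    · rintro _ ⟨n, rfl⟩
      show (n : ℝ) ∈ Set.Ici (0 : ℝ)
      exact Set.mem_Ici.2 (Nat.cast_nonneg n)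
    · intro M
      obtain ⟨n, hn⟩ := exists_nat_gt M
      exact ⟨n, ⟨n, rfl⟩, hn⟩
  · rintro _ ⟨m1, rfl⟩ _ ⟨m2, rfl⟩
    simp only [Nat.floor_natCast]
    rcases le_total m1 m2 with h | h
    · have h1 := hgg m1 m2 h
      have h2 : (wordDist S (γ 0 * (C m1).prod) (γ 0 * (C m2).prod) : ℝ) + m1 = m2 := by
        exact_mod_cast congrArg (fun k : ℕ => (k : ℝ)) h1
      have habs : |(m1 : ℝ) - m2| = (m2 : ℝ) - m1 := by
        rw [abs_sub_comm]
        exact abs_of_nonneg (sub_nonneg.2 (by exact_mod_cast h))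
      rw [habs]
      linarith
    · have h1 := hgg m2 m1 h
      have hsy : wordDist S (γ 0 * (C m1).prod) (γ 0 * (C m2).prod)
          = wordDist S (γ 0 * (C m2).prod) (γ 0 * (C m1).prod) := wd_symm hSsym hgen _ _
      have h2 : (wordDist S (γ 0 * (C m2).prod) (γ 0 * (C m1).prod) : ℝ) + m2 = m1 := by
        exact_mod_cast congrArg (fun k : ℕ => (k : ℝ)) h1
      have habs : |(m1 : ℝ) - m2| = (m1 : ℝ) - m2 :=
        abs_of_nonneg (sub_nonneg.2 (by exact_mod_cast h))
      rw [habs, hsy]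
      linarith
  · intro y z
    obtain ⟨βy, Ny, hβy, n₀y, hny⟩ := main y
    obtain ⟨βz, Nz, hβz, n₀z, hnz⟩ := main z
    refine ⟨(βy : ℝ) - βz, ?_, ?_⟩
    · have hmem : (Set.Ici (max Ny Nz) ∩ T) ∈ atTop ⊓ 𝓟 T :=
        inter_mem_inf (Ici_mem_atTop _) (mem_principal_self T)
      have hev : (fun t => (wordDist S (γ t) y : ℝ) - (wordDist S (γ t) z : ℝ))
          =ᶠ[atTop ⊓ 𝓟 T] (fun _ => (βy : ℝ) - βz) := by
        refine Filter.eventuallyEq_of_mem hmem ?_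
        intro t ht
        obtain ⟨ht1, ht2⟩ := ht
        have e1 := hβy t ht2 (le_trans (le_max_left _ _) ht1)
        have e2 := hβz t ht2 (le_trans (le_max_right _ _) ht1)
        have e3 : ((wordDist S (γ t) y : ℤ) - (wordDist S (γ t) z : ℤ)) = βy - βz := by omega
        show (wordDist S (γ t) y : ℝ) - (wordDist S (γ t) z : ℝ) = (βy : ℝ) - βz
        exact_mod_cast congrArg (fun k : ℤ => (k : ℝ)) e3
      exact Tendsto.congr' hev.symm tendsto_const_nhds
    · have hmem : (Set.Ici ((max n₀y n₀z : ℕ) : ℝ) ∩ Set.range (fun n : ℕ => (n : ℝ)))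
          ∈ atTop ⊓ 𝓟 (Set.range (fun n : ℕ => (n : ℝ))) :=
        inter_mem_inf (Ici_mem_atTop _) (mem_principal_self _)
      have hev : (fun r => (wordDist S (γ 0 * (C ⌊r⌋₊).prod) y : ℝ)
            - (wordDist S (γ 0 * (C ⌊r⌋₊).prod) z : ℝ))
          =ᶠ[atTop ⊓ 𝓟 (Set.range (fun n : ℕ => (n : ℝ)))] (fun _ => (βy : ℝ) - βz) := by
        refine Filter.eventuallyEq_of_mem hmem ?_
        rintro r ⟨hr1, n, rfl⟩
        have hn : max n₀y n₀z ≤ n := by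
          have h' : ((max n₀y n₀z : ℕ) : ℝ) ≤ (n : ℝ) := hr1
          exact_mod_cast h'
        simp only [Nat.floor_natCast]
        have e1 := hny n (le_trans (le_max_left _ _) hn)
        have e2 := hnz n (le_trans (le_max_right _ _) hn)
        have e3 : ((wordDist S (γ 0 * (C n).prod) y : ℤ)
            - (wordDist S (γ 0 * (C n).prod) z : ℤ)) = βy - βz := by omega
        show (wordDist S (γ 0 * (C n).prod) y : ℝ)
            - (wordDist S (γ 0 * (C n).prod) z : ℝ) = (βy : ℝ) - βz
        exact_mod_cast congrArg (fun k : ℤ => (k : ℝ)) e3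
      exact Tendsto.congr' hev.symm tendsto_const_nhds
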